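/- Let a ≤ b be real numbers and let c : ℝ → EuclideanSpace ℝ (Fin 3) be continuously differentiable on [a,b] with ‖c(t)‖ ≥ 1 for all t ∈ [a,b]. Let Π(X) = ‖X‖⁻¹ • X be the normalization map. Then the length of Π ∘ c is at most the length of c: ∫_a^b ‖(Π ∘ c)'(t)‖ dt ≤ ∫_a^b ‖c'(t)‖ dt. -/

import Mathlib

open Set

local notation "⟪" x ", " y "⟫" => @inner ℝ _ _ x y

lemma stmt7_aux_norm_deriv {c c' : ℝ → EuclideanSpace ℝ (Fin 3)} {t : ℝ}
    (h : HasDerivAt c (c' t) t) (h1 : 1 ≤ ‖c t‖) :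
    HasDerivAt (fun s => ‖c s‖) (⟪c t, c' t⟫ / ‖c t‖) t := by
  have hn : ‖c t‖ ≠ 0 := by linarith
  have hq : (0:ℝ) < ⟪c t, c t⟫ := by
    rw [real_inner_self_eq_norm_mul_norm]; nlinarith
  have hinner : HasDerivAt (fun s => ⟪c s, c s⟫) (⟪c t, c' t⟫ + ⟪c' t, c t⟫) t :=
    h.inner ℝ h
  have hsqrt := (Real.hasDerivAt_sqrt hq.ne').comp t hinner
  have heq : (fun s => Real.sqrt ⟪c s, c s⟫) = fun s => ‖c s‖ := by
    funext s
    rw [real_inner_self_eq_norm_mul_norm, Real.sqrt_mul_self (norm_nonneg _)]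
  simp only [Function.comp_def] at hsqrt
  rw [heq] at hsqrt
  refine HasDerivAt.congr_deriv hsqrt ?_
  have hs : Real.sqrt ⟪c t, c t⟫ = ‖c t‖ := by
    rw [real_inner_self_eq_norm_mul_norm, Real.sqrt_mul_self (norm_nonneg _)]
  rw [hs, real_inner_comm (c' t) (c t)]
  field_simp
  ring

lemma stmt7_aux_hasDerivAt {c c' : ℝ → EuclideanSpace ℝ (Fin 3)} {t : ℝ}
    (h : HasDerivAt c (c' t) t) (h1 : 1 ≤ ‖c t‖) :
    HasDerivAt (fun s => ‖c s‖⁻¹ • c s)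
      (‖c t‖⁻¹ • c' t + (-(⟪c t, c' t⟫ / ‖c t‖) / (‖c t‖) ^ 2) • c t) t := by
  have hn : ‖c t‖ ≠ 0 := by linarith
  exact ((stmt7_aux_norm_deriv h h1).inv hn).smul h

lemma stmt7_aux_bound {c c' : ℝ → EuclideanSpace ℝ (Fin 3)} {t : ℝ}
    (h1 : 1 ≤ ‖c t‖) :
    ‖‖c t‖⁻¹ • c' t + (-(⟪c t, c' t⟫ / ‖c t‖) / (‖c t‖) ^ 2) • c t‖ ≤ ‖c' t‖ := by
  set n : ℝ := ‖c t‖ with hn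
  set p : ℝ := ⟪c t, c' t⟫ with hp
  have hn0 : (0:ℝ) < n := by linarith
  set k : ℝ := -(p / n) / n ^ 2 with hk
  have hsq : ‖n⁻¹ • c' t + k • c t‖ ^ 2 = n⁻¹ ^ 2 * ‖c' t‖ ^ 2 + 2 * (n⁻¹ * k * p) + k ^ 2 * n ^ 2 := by
    rw [norm_add_sq_real, real_inner_smul_left, real_inner_smul_right, norm_smul, norm_smul,
      mul_pow, mul_pow, Real.norm_eq_abs, Real.norm_eq_abs, sq_abs, sq_abs]
    linear_combination (2 * n⁻¹ * k) * real_inner_comm (c t) (c' t) - (2 * n⁻¹ * k) * hp -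
      k ^ 2 * (n + ‖c t‖) * hn
  have hineq : ‖n⁻¹ • c' t + k • c t‖ ^ 2 ≤ ‖c' t‖ ^ 2 := by
    rw [hsq, hk]
    have h2 : n⁻¹ ^ 2 * ‖c' t‖ ^ 2 + 2 * (n⁻¹ * (-(p / n) / n ^ 2) * p) +
        (-(p / n) / n ^ 2) ^ 2 * n ^ 2 = ‖c' t‖ ^ 2 / n ^ 2 - p ^ 2 / n ^ 4 := by
      field_simp
      ring
    rw [h2]
    have hA : ‖c' t‖ ^ 2 / n ^ 2 ≤ ‖c' t‖ ^ 2 := div_le_self (by positivity) (by nlinarith)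
    have hB : (0:ℝ) ≤ p ^ 2 / n ^ 4 := by positivity
    linarith
  have hs := Real.sqrt_le_sqrt hineq
  rwa [Real.sqrt_sq (norm_nonneg _), Real.sqrt_sq (norm_nonneg _)] at hs

/-- for a C¹ curve `c` on `[a,b]` staying outside the open unit ball of
`ℝ³`, the radial projection `Π(X) = ‖X‖⁻¹ • X` onto the unit sphere does not
increase the length. -/
theorem stmt7 {a b : ℝ} (hab : a ≤ b)
    (c c' : ℝ → EuclideanSpace ℝ (Fin 3))
    (hderiv : ∀ t ∈ Icc a b, HasDerivAt c (c' t) t)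
    (hcont : ContinuousOn c' (Icc a b))
    (hout : ∀ t ∈ Icc a b, 1 ≤ ‖c t‖) :
    ∫ t in a..b, ‖deriv (fun s => ‖c s‖⁻¹ • c s) t‖ ≤ ∫ t in a..b, ‖c' t‖ := by
  set g : ℝ → EuclideanSpace ℝ (Fin 3) := fun t =>
    ‖c t‖⁻¹ • c' t + (-(⟪c t, c' t⟫ / ‖c t‖) / (‖c t‖) ^ 2) • c t with hg
  have hderivg : ∀ t ∈ Icc a b, deriv (fun s => ‖c s‖⁻¹ • c s) t = g t := fun t ht =>
    (stmt7_aux_hasDerivAt (hderiv t ht) (hout t ht)).deriv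
  have hcc : ContinuousOn c (Icc a b) := fun t ht =>
    (hderiv t ht).continuousAt.continuousWithinAt
  have hnorm : ContinuousOn (fun t => ‖c t‖) (Icc a b) := hcc.norm
  have hne : ∀ t ∈ Icc a b, ‖c t‖ ≠ 0 := fun t ht => by have := hout t ht; linarith
  have hgcont : ContinuousOn g (Icc a b) := by
    apply ContinuousOn.add
    · exact (hnorm.inv₀ hne).smul hcont
    · refine ContinuousOn.smul (?_ : ContinuousOn (fun t => -(⟪c t, c' t⟫ / ‖c t‖) / (‖c t‖) ^ 2) (Icc a b)) hcc
      refine ContinuousOn.div ?_ (hnorm.pow 2) ?_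
      · exact (((hcc.inner hcont).div hnorm hne)).neg
      · intro t ht
        exact pow_ne_zero 2 (hne t ht)
  have h1 : ∫ t in a..b, ‖deriv (fun s => ‖c s‖⁻¹ • c s) t‖ = ∫ t in a..b, ‖g t‖ := by
    apply intervalIntegral.integral_congr
    intro t ht
    rw [uIcc_of_le hab] at ht
    simp only
    rw [hderivg t ht]
  rw [h1]
  have hIg : IntervalIntegrable (fun t => ‖g t‖) MeasureTheory.volume a b := by
    apply ContinuousOn.intervalIntegrable
    rw [uIcc_of_le hab]; exact hgcont.norm
  have hIc : IntervalIntegrable (fun t => ‖c' t‖) MeasureTheory.volume a b := by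
    apply ContinuousOn.intervalIntegrable
    rw [uIcc_of_le hab]; exact hcont.norm
  apply intervalIntegral.integral_mono_on hab hIg hIc
  intro t ht
  exact stmt7_aux_bound (hout t ht)
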